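/- Let k be an algebraically closed field of characteristic zero and let H be a commutative Hopf k-algebra which is finitely generated as a k-algebra. Suppose H is connected graded as an algebra, i.e. H = ⊕_{i ≥ 0} H(i) with H(i)H(j) ⊆ H(i+j) and H(0) = k·1. Then H is isomorphic as a k-algebra to a polynomial algebra k[X_1, …, X_n] in finitely many variables. -/

import Mathlib

set_option linter.unusedSectionVars false

/-!
Auxiliary development for the main theorem below.

Outline: let `g = π₀ : H →ₐ[k] k` be the degree-zero projection (an algebra map since the
grading is connected).  Translating the comultiplication of the Hopf algebra by `g` (using the
antipode to invert the translation) produces an algebra map `Δ' : H →ₐ[k] H ⊗[k] H` whose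
"counit" is `g`, i.e. `(id ⊗ g) ∘ Δ' = id = (g ⊗ id) ∘ Δ'`.  Let `I = ker g` (the irrelevant
ideal `H₊`) and `V = H/(k·1 + I²)` (a model for `I/I²`).  Then `D = (id ⊗ q) ∘ Δ'` is a
`k`-derivation `H → H ⊗ V` with `D x ≡ 1 ⊗ q x  mod  I ⊗ V` for `x ∈ I`.  Choosing homogeneous
algebra generators `x₁, …, xₙ` of `H` whose classes form a basis of `V`, any polynomial
relation `f(x₁,…,xₙ) = 0` yields, upon applying `D` and reading off coordinates,
`∂ⱼf(x) ∈ ⋂ₛ Iˢ = 0` (the intersection vanishes by the grading); by induction on total degree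
(using characteristic zero) every relation vanishes, so `H ≅ k[X₁,…,Xₙ]`.
-/

section SecPDeriv

open MvPolynomial

variable {k : Type*} [Field k]

theorem CGH.coeff_pderiv {n : ℕ} (j : Fin n) (f : MvPolynomial (Fin n) k) (m : Fin n →₀ ℕ) :
    coeff m (pderiv j f) = (m j + 1 : ℕ) * coeff (m + Finsupp.single j 1) f := by
  induction f using MvPolynomial.induction_on' with
  | monomial s a =>
    rw [pderiv_monomial]
    rw [coeff_monomial, coeff_monomial]
    by_cases hs : s = m + Finsupp.single j 1
    · subst hs
      have h1 : m + Finsupp.single j 1 - Finsupp.single j 1 = m := by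
        simp
      rw [if_pos h1, if_pos rfl]
      push_cast [Finsupp.add_apply, Finsupp.single_eq_same]
      ring
    · rw [if_neg hs]
      by_cases h2 : s - Finsupp.single j 1 = m
      · rw [if_pos h2]
        have hsj : s j = 0 := by
          by_contra hne
          apply hs
          have : Finsupp.single j 1 ≤ s := by
            rw [Finsupp.single_le_iff]
            omega
          rw [← h2, tsub_add_cancel_of_le this]
        simp [hsj]
      · rw [if_neg h2, mul_zero]
  | add p q hp hq => simp [hp, hq, mul_add]

theorem CGH.totalDegree_pderiv_le {n : ℕ} (j : Fin n) (f : MvPolynomial (Fin n) k) (d : ℕ)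
    (hf : f.totalDegree ≤ d + 1) : (pderiv j f).totalDegree ≤ d := by
  rw [totalDegree]
  apply Finset.sup_le
  intro m hm
  rw [mem_support_iff, CGH.coeff_pderiv] at hm
  have h2 : coeff (m + Finsupp.single j 1) f ≠ 0 := by
    intro h; rw [h, mul_zero] at hm; exact hm rfl
  have h3 := le_totalDegree (mem_support_iff.mpr h2)
  have h4 : (m + Finsupp.single j 1).sum (fun _ e => e) = m.sum (fun _ e => e) + 1 := by
    rw [Finsupp.sum_add_index (by simp) (by simp)]
    simp
  omega

theorem CGH.eq_C_of_pderiv_eq_zero {n : ℕ} [CharZero k] (f : MvPolynomial (Fin n) k)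
    (hf : ∀ j, pderiv j f = 0) : f = C (coeff 0 f) := by
  ext m
  rw [coeff_C]
  by_cases hm : 0 = m
  · rw [if_pos hm, ← hm]
  · rw [if_neg hm]
    have hmne : m ≠ 0 := fun h => hm h.symm
    obtain ⟨j, hj⟩ : ∃ j, m j ≠ 0 := by
      by_contra hc
      push_neg at hc
      exact hmne (Finsupp.ext fun j => hc j)
    have hle : Finsupp.single j 1 ≤ m := by rw [Finsupp.single_le_iff]; omega
    have := CGH.coeff_pderiv j f (m - Finsupp.single j 1)
    rw [hf j, tsub_add_cancel_of_le hle] at this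
    rw [coeff_zero] at this
    rcases mul_eq_zero.mp this.symm with h | h
    · rw [Nat.cast_eq_zero] at h; omega
    · exact h

end SecPDeriv

section SecHopf

open Coalgebra TensorProduct

variable {k H : Type*} [Field k] [CommRing H] [HopfAlgebra k H]

namespace CGH

noncomputable def tau (g : H →ₐ[k] k) : H →ₐ[k] H :=
  (Algebra.TensorProduct.lid k H).toAlgHom.comp
    ((Algebra.TensorProduct.map g (AlgHom.id k H)).comp (Bialgebra.comulAlgHom k H))

lemma tau_apply (g : H →ₐ[k] k) (h : H) {ι : Type*} (r : Coalgebra.Repr k h ι) :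
    tau g h = ∑ i ∈ r.index, g (r.left i) • r.right i := by
  simp only [tau, AlgHom.coe_comp, AlgEquiv.toAlgHom_eq_coe, AlgHom.coe_coe, Function.comp_apply,
    Bialgebra.comulAlgHom_apply, ← r.eq, map_sum, Algebra.TensorProduct.map_tmul,
    AlgHom.coe_id, id_eq, AlgEquiv.coe_toAlgHom, Algebra.TensorProduct.lid_tmul]

noncomputable def sigma (g : H →ₐ[k] k) : H →ₗ[k] H :=
  (TensorProduct.lid k H).toLinearMap ∘ₗ
    (TensorProduct.map (g.toLinearMap ∘ₗ HopfAlgebra.antipode (R := k)) LinearMap.id) ∘ₗ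
      Coalgebra.comul

lemma sigma_apply (g : H →ₐ[k] k) (h : H) {ι : Type*} (r : Coalgebra.Repr k h ι) :
    sigma g h = ∑ i ∈ r.index, g (HopfAlgebra.antipode (R := k) (r.left i)) • r.right i := by
  simp only [sigma, LinearMap.coe_comp, LinearEquiv.coe_coe, Function.comp_apply, ← r.eq,
    map_sum, TensorProduct.map_tmul, LinearMap.coe_comp, Function.comp_apply, LinearMap.id_coe,
    id_eq, TensorProduct.lid_tmul, AlgHom.toLinearMap_apply]

lemma sigma_tau (g : H →ₐ[k] k) (h : H) : sigma g (tau g h) = h := by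
  set r := Coalgebra.Repr.arbitrary k h with hr
  have a₂ : (i : r.ι) → Coalgebra.Repr k (r.right i) (H × H) := fun i => Coalgebra.Repr.arbitrary k _
  have a₁ : (i : r.ι) → Coalgebra.Repr k (r.left i) (H × H) := fun i => Coalgebra.Repr.arbitrary k _
  have key := Coalgebra.sum_tmul_tmul_eq (R := k) (A := H) r a₁ a₂
  -- the evaluation map
  set b : H →ₗ[k] k := g.toLinearMap ∘ₗ HopfAlgebra.antipode (R := k) with hb
  set Φ : H ⊗[k] (H ⊗[k] H) →ₗ[k] H :=
    (TensorProduct.lid k H).toLinearMap ∘ₗ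
      (TensorProduct.map g.toLinearMap
        ((TensorProduct.lid k H).toLinearMap ∘ₗ TensorProduct.map b LinearMap.id)) with hΦ
  have hΦapp : ∀ (x y z : H), Φ (x ⊗ₜ (y ⊗ₜ z)) =
      g x • (g (HopfAlgebra.antipode (R := k) y) • z) := by
    intro x y z
    simp [hΦ, hb]
    rw [smul_comm]
  have hL : sigma g (tau g h) = Φ (∑ i ∈ r.index, ∑ j ∈ (a₂ i).index,
      r.left i ⊗ₜ[k] ((a₂ i).left j ⊗ₜ[k] (a₂ i).right j)) := by
    rw [tau_apply g h r, map_sum, map_sum]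
    refine Finset.sum_congr rfl fun i _ => ?_
    rw [map_smul, sigma_apply g (r.right i) (a₂ i), map_sum]
    rw [Finset.smul_sum]
    refine Finset.sum_congr rfl fun j _ => ?_
    rw [hΦapp]
  rw [hL, ← key]
  have hR : Φ (∑ i ∈ r.index, ∑ j ∈ (a₁ i).index,
      ((a₁ i).left j ⊗ₜ[k] ((a₁ i).right j ⊗ₜ[k] r.right i))) =
      ∑ i ∈ r.index, (Coalgebra.counit (R := k) (r.left i)) • r.right i := by
    rw [map_sum]
    refine Finset.sum_congr rfl fun i _ => ?_
    rw [map_sum]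
    have : ∀ j ∈ (a₁ i).index, Φ ((a₁ i).left j ⊗ₜ[k] ((a₁ i).right j ⊗ₜ[k] r.right i)) =
        (g ((a₁ i).left j * HopfAlgebra.antipode (R := k) ((a₁ i).right j))) • r.right i := by
      intro j _
      rw [hΦapp, smul_smul, ← map_mul]
    rw [Finset.sum_congr rfl this, ← Finset.sum_smul, ← map_sum,
      HopfAlgebra.sum_mul_antipode_eq_smul (a₁ i)]
    rw [map_smul, map_one, smul_assoc, one_smul]
  rw [hR]
  have h2 := Coalgebra.sum_counit_tmul_eq (R := k) r
  have := congrArg (TensorProduct.lid k H) h2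
  rw [map_sum] at this
  simp only [TensorProduct.lid_tmul, one_smul] at this
  exact this

lemma tau_sigma (g : H →ₐ[k] k) (h : H) : tau g (sigma g h) = h := by
  set r := Coalgebra.Repr.arbitrary k h with hr
  have a₂ : (i : r.ι) → Coalgebra.Repr k (r.right i) (H × H) := fun i => Coalgebra.Repr.arbitrary k _
  have a₁ : (i : r.ι) → Coalgebra.Repr k (r.left i) (H × H) := fun i => Coalgebra.Repr.arbitrary k _
  have key := Coalgebra.sum_tmul_tmul_eq (R := k) (A := H) r a₁ a₂
  set b : H →ₗ[k] k := g.toLinearMap ∘ₗ HopfAlgebra.antipode (R := k) with hb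
  set Φ : H ⊗[k] (H ⊗[k] H) →ₗ[k] H :=
    (TensorProduct.lid k H).toLinearMap ∘ₗ
      (TensorProduct.map b
        ((TensorProduct.lid k H).toLinearMap ∘ₗ TensorProduct.map g.toLinearMap LinearMap.id))
    with hΦ
  have hΦapp : ∀ (x y z : H), Φ (x ⊗ₜ (y ⊗ₜ z)) =
      g (HopfAlgebra.antipode (R := k) x) • (g y • z) := by
    intro x y z
    simp [hΦ, hb]
    rw [smul_comm]
  have hL : tau g (sigma g h) = Φ (∑ i ∈ r.index, ∑ j ∈ (a₂ i).index,
      r.left i ⊗ₜ[k] ((a₂ i).left j ⊗ₜ[k] (a₂ i).right j)) := by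
    rw [sigma_apply g h r, map_sum, map_sum]
    refine Finset.sum_congr rfl fun i _ => ?_
    rw [map_smul, tau_apply g (r.right i) (a₂ i), map_sum]
    rw [Finset.smul_sum]
    refine Finset.sum_congr rfl fun j _ => ?_
    rw [hΦapp]
  rw [hL, ← key]
  have hR : Φ (∑ i ∈ r.index, ∑ j ∈ (a₁ i).index,
      ((a₁ i).left j ⊗ₜ[k] ((a₁ i).right j ⊗ₜ[k] r.right i))) =
      ∑ i ∈ r.index, (Coalgebra.counit (R := k) (r.left i)) • r.right i := by
    rw [map_sum]
    refine Finset.sum_congr rfl fun i _ => ?_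
    rw [map_sum]
    have : ∀ j ∈ (a₁ i).index, Φ ((a₁ i).left j ⊗ₜ[k] ((a₁ i).right j ⊗ₜ[k] r.right i)) =
        (g (HopfAlgebra.antipode (R := k) ((a₁ i).left j) * (a₁ i).right j)) • r.right i := by
      intro j _
      rw [hΦapp, smul_smul, ← map_mul]
    rw [Finset.sum_congr rfl this, ← Finset.sum_smul, ← map_sum,
      HopfAlgebra.sum_antipode_mul_eq_smul (a₁ i)]
    rw [map_smul, map_one, smul_assoc, one_smul]
  rw [hR]
  have h2 := Coalgebra.sum_counit_tmul_eq (R := k) r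
  have := congrArg (TensorProduct.lid k H) h2
  rw [map_sum] at this
  simp only [TensorProduct.lid_tmul, one_smul] at this
  exact this

noncomputable def tauEquiv (g : H →ₐ[k] k) : H ≃ₐ[k] H :=
  AlgEquiv.ofBijective (tau g)
    ⟨Function.LeftInverse.injective (sigma_tau g),
     Function.RightInverse.surjective (tau_sigma g)⟩

lemma tauEquiv_apply (g : H →ₐ[k] k) (h : H) : tauEquiv g h = tau g h := rfl

lemma counit_tau (g : H →ₐ[k] k) (h : H) : Coalgebra.counit (R := k) (tau g h) = g h := by
  set r := Coalgebra.Repr.arbitrary k h with hr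
  rw [tau_apply g h r, map_sum]
  have h2 := Coalgebra.sum_tmul_counit_eq (R := k) r
  set ψ : H ⊗[k] k →ₗ[k] k := (TensorProduct.lid k k).toLinearMap ∘ₗ
    TensorProduct.map g.toLinearMap LinearMap.id with hψ
  have := congrArg ψ h2
  rw [map_sum] at this
  simp only [hψ, LinearMap.coe_comp, LinearEquiv.coe_coe, Function.comp_apply,
    TensorProduct.map_tmul, LinearMap.id_coe, id_eq, TensorProduct.lid_tmul,
    AlgHom.toLinearMap_apply, smul_eq_mul, mul_one] at this
  rw [← this]
  refine Finset.sum_congr rfl fun i _ => ?_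
  rw [map_smul, smul_eq_mul]

noncomputable def tauInv (g : H →ₐ[k] k) : H →ₐ[k] H := (tauEquiv g).symm

lemma tau_tauInv (g : H →ₐ[k] k) (h : H) : tau g (tauInv g h) = h :=
  (tauEquiv g).apply_symm_apply h

lemma tauInv_tau (g : H →ₐ[k] k) (h : H) : tauInv g (tau g h) = h :=
  (tauEquiv g).symm_apply_apply h

lemma g_tauInv (g : H →ₐ[k] k) (y : H) : g (tauInv g y) = Coalgebra.counit (R := k) y := by
  have := counit_tau g (tauInv g y)
  rw [tau_tauInv] at this
  exact this.symm

/-- The conjugated comultiplication, an algebra map whose "counit" is `g`. -/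
noncomputable def comul' (g : H →ₐ[k] k) : H →ₐ[k] H ⊗[k] H :=
  (Algebra.TensorProduct.map (tauInv g) (tauInv g)).comp
    ((Bialgebra.comulAlgHom k H).comp (tauEquiv g).toAlgHom)

lemma comul'_apply (g : H →ₐ[k] k) (h : H) (s : Finset (H × H))
    (hs : (Coalgebra.comul (R := k) (tau g h) : H ⊗[k] H) = ∑ p ∈ s, p.1 ⊗ₜ[k] p.2) :
    comul' g h = ∑ p ∈ s, tauInv g p.1 ⊗ₜ[k] tauInv g p.2 := by
  simp only [comul', AlgHom.coe_comp, Function.comp_apply, AlgEquiv.toAlgHom_eq_coe,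
    AlgHom.coe_coe, AlgEquiv.coe_toAlgHom, tauEquiv_apply, Bialgebra.comulAlgHom_apply, hs, map_sum,
    Algebra.TensorProduct.map_tmul]

lemma lTensor_comul' (g : H →ₐ[k] k) (h : H) :
    LinearMap.lTensor H g.toLinearMap (comul' g h) = h ⊗ₜ[k] (1 : k) := by
  obtain ⟨s, hs⟩ := TensorProduct.exists_finset (R := k) (Coalgebra.comul (R := k) (tau g h))
  rw [comul'_apply g h s hs, map_sum]
  simp only [LinearMap.lTensor_tmul, AlgHom.toLinearMap_apply, g_tauInv]
  have hcl : (LinearMap.lTensor H (Coalgebra.counit (R := k))) (Coalgebra.comul (R := k) (tau g h))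
      = (tau g h) ⊗ₜ[k] (1 : k) := Coalgebra.lTensor_counit_comul _
  rw [hs, map_sum] at hcl
  simp only [LinearMap.lTensor_tmul] at hcl
  have := congrArg (LinearMap.rTensor k (tauInv g).toLinearMap) hcl
  rw [map_sum] at this
  simp only [LinearMap.rTensor_tmul, AlgHom.toLinearMap_apply] at this
  rw [this, tauInv_tau]

lemma rTensor_comul' (g : H →ₐ[k] k) (h : H) :
    LinearMap.rTensor H g.toLinearMap (comul' g h) = (1 : k) ⊗ₜ[k] h := by
  obtain ⟨s, hs⟩ := TensorProduct.exists_finset (R := k) (Coalgebra.comul (R := k) (tau g h))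
  rw [comul'_apply g h s hs, map_sum]
  simp only [LinearMap.rTensor_tmul, AlgHom.toLinearMap_apply, g_tauInv]
  have hcl : (LinearMap.rTensor H (Coalgebra.counit (R := k))) (Coalgebra.comul (R := k) (tau g h))
      = (1 : k) ⊗ₜ[k] (tau g h) := Coalgebra.rTensor_counit_comul _
  rw [hs, map_sum] at hcl
  simp only [LinearMap.rTensor_tmul] at hcl
  have := congrArg (LinearMap.lTensor k (tauInv g).toLinearMap) hcl
  rw [map_sum] at this
  simp only [LinearMap.lTensor_tmul, AlgHom.toLinearMap_apply] at this
  rw [this, tauInv_tau]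

end CGH

end SecHopf

section SecGraded

open DirectSum

variable {k H : Type*} [Field k] [CommRing H] [Algebra k H] [Nontrivial H]
variable (𝒜 : ℕ → Submodule k H) [GradedAlgebra 𝒜]

namespace CGH

lemma exists_proj0 (hconn : 𝒜 0 = 1) (h : H) :
    ∃ c : k, algebraMap k H c = (DirectSum.decompose 𝒜 h 0 : H) := by
  have hm : (DirectSum.decompose 𝒜 h 0 : H) ∈ (1 : Submodule k H) := by
    rw [← hconn]; exact (DirectSum.decompose 𝒜 h 0).2
  exact Submodule.mem_one.mp hm

lemma algebraMap_mem_zero (hconn : 𝒜 0 = 1) (c : k) : algebraMap k H c ∈ 𝒜 0 := by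
  rw [hconn]; exact Submodule.mem_one.mpr ⟨c, rfl⟩

noncomputable def p0fun (hconn : 𝒜 0 = 1) (h : H) : k := (exists_proj0 𝒜 hconn h).choose

lemma p0fun_spec (hconn : 𝒜 0 = 1) (h : H) :
    algebraMap k H (p0fun 𝒜 hconn h) = (DirectSum.decompose 𝒜 h 0 : H) :=
  (exists_proj0 𝒜 hconn h).choose_spec

lemma decompose_zero_mul (x y : H) :
    (DirectSum.decompose 𝒜 (x * y) 0 : H) =
      (DirectSum.decompose 𝒜 x 0 : H) * (DirectSum.decompose 𝒜 y 0 : H) := by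
  have := map_mul (GradedRing.projZeroRingHom 𝒜) x y
  simpa only [GradedRing.projZeroRingHom_apply] using this

noncomputable def proj0 (hconn : 𝒜 0 = 1) : H →ₐ[k] k where
  toFun := p0fun 𝒜 hconn
  map_one' := by
    apply RingHom.injective (algebraMap k H)
    rw [p0fun_spec, decompose_of_mem_same 𝒜 (SetLike.GradedOne.one_mem (A := 𝒜))]
    simp
  map_mul' := fun x y => by
    apply RingHom.injective (algebraMap k H)
    rw [map_mul, p0fun_spec, p0fun_spec, p0fun_spec, decompose_zero_mul]
  map_zero' := by
    apply RingHom.injective (algebraMap k H)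
    rw [p0fun_spec, DirectSum.decompose_zero]
    simp
  map_add' := fun x y => by
    apply RingHom.injective (algebraMap k H)
    rw [map_add, p0fun_spec, p0fun_spec, p0fun_spec, DirectSum.decompose_add,
      DirectSum.add_apply, Submodule.coe_add]
  commutes' := fun c => by
    apply RingHom.injective (algebraMap k H)
    rw [p0fun_spec, decompose_of_mem_same 𝒜 (algebraMap_mem_zero 𝒜 hconn c)]
    norm_cast

lemma algebraMap_proj0 (hconn : 𝒜 0 = 1) (h : H) :
    algebraMap k H (proj0 𝒜 hconn h) = (DirectSum.decompose 𝒜 h 0 : H) :=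
  p0fun_spec 𝒜 hconn h

lemma proj0_eq_zero_iff (hconn : 𝒜 0 = 1) (h : H) :
    proj0 𝒜 hconn h = 0 ↔ (DirectSum.decompose 𝒜 h 0 : H) = 0 := by
  constructor
  · intro hz
    rw [← algebraMap_proj0 𝒜 hconn h, hz, map_zero]
  · intro hz
    apply RingHom.injective (algebraMap k H)
    rw [algebraMap_proj0 𝒜 hconn h, hz, map_zero]

lemma decompose_eq_zero_of_mem_pow (I : Ideal H)
    (hI : ∀ x ∈ I, (DirectSum.decompose 𝒜 x 0 : H) = 0) :
    ∀ s : ℕ, ∀ h ∈ I ^ s, ∀ i : ℕ, i < s → (DirectSum.decompose 𝒜 h i : H) = 0 := by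
  classical
  intro s
  induction s with
  | zero => intro h _ i hi; omega
  | succ s IH =>
    intro h hh
    rw [pow_succ] at hh
    refine Submodule.mul_induction_on hh ?_ ?_
    · intro m hm n hn i hi
      rw [DirectSum.decompose_mul, DirectSum.coe_mul_apply]
      apply Finset.sum_eq_zero
      intro ij hij
      rw [Finset.mem_filter] at hij
      by_cases hp : ij.1 < s
      · rw [IH m hm ij.1 hp, zero_mul]
      · have hq : ij.2 = 0 := by omega
        rw [hq, hI n hn, mul_zero]
    · intro a b ha hb i hi
      rw [DirectSum.decompose_add, DirectSum.add_apply, Submodule.coe_add,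
        ha i hi, hb i hi, add_zero]

lemma eq_zero_of_forall_mem_pow (I : Ideal H)
    (hI : ∀ x ∈ I, (DirectSum.decompose 𝒜 x 0 : H) = 0)
    (h : H) (hh : ∀ s : ℕ, h ∈ I ^ s) : h = 0 := by
  classical
  have hz : ∀ i : ℕ, (DirectSum.decompose 𝒜 h i : H) = 0 := fun i =>
    decompose_eq_zero_of_mem_pow 𝒜 I hI (i + 1) h (hh (i + 1)) i (Nat.lt_succ_self i)
  rw [← DirectSum.sum_support_decompose 𝒜 h]
  exact Finset.sum_eq_zero fun i _ => hz i

lemma adjoin_eq_top_of_generates (hconn : 𝒜 0 = 1) (I : Ideal H)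
    (hI : ∀ x ∈ I, (DirectSum.decompose 𝒜 x 0 : H) = 0)
    {n : ℕ} (x : Fin n → H) (hx : ∀ j, ∃ d, x j ∈ 𝒜 d)
    (hdec : ∀ h : H, ∃ (c : k) (cf : Fin n → k) (z : H), z ∈ I * I ∧
      h = algebraMap k H c + (∑ j, cf j • x j) + z) :
    Algebra.adjoin k (Set.range x) = ⊤ := by
  classical
  have main : ∀ d : ℕ, ∀ h ∈ 𝒜 d, h ∈ Algebra.adjoin k (Set.range x) := by
    intro d
    induction d using Nat.strong_induction_on with
    | _ d IH =>
    intro h hh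
    by_cases hd : d = 0
    · subst hd
      rw [hconn] at hh
      obtain ⟨c, hc⟩ := Submodule.mem_one.mp hh
      rw [← hc]
      exact Subalgebra.algebraMap_mem _ c
    · obtain ⟨c, cf, z, hz, hrep⟩ := hdec h
      have hdh : h = (DirectSum.decompose 𝒜 h d : H) := (decompose_of_mem_same 𝒜 hh).symm
      rw [hdh, hrep, DirectSum.decompose_add, DirectSum.decompose_add,
        DirectSum.add_apply, DirectSum.add_apply, Submodule.coe_add, Submodule.coe_add]
      apply Subalgebra.add_mem
      apply Subalgebra.add_mem
      · have hmem : algebraMap k H c ∈ 𝒜 0 := algebraMap_mem_zero 𝒜 hconn c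
        rw [decompose_of_mem_ne 𝒜 hmem (Ne.symm hd)]
        exact Subalgebra.zero_mem _
      · rw [DirectSum.decompose_sum, DFinsupp.finset_sum_apply, AddSubmonoidClass.coe_finset_sum]
        apply Subalgebra.sum_mem
        intro j _
        rw [DirectSum.decompose_smul, DFinsupp.smul_apply, SetLike.val_smul]
        apply Subalgebra.smul_mem
        obtain ⟨e, he⟩ := hx j
        by_cases hed : e = d
        · subst hed
          rw [decompose_of_mem_same 𝒜 he]
          exact Algebra.subset_adjoin ⟨j, rfl⟩
        · rw [decompose_of_mem_ne 𝒜 he hed]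
          exact Subalgebra.zero_mem _
      · refine Submodule.mul_induction_on hz ?_ ?_
        · intro m hm' n hn'
          rw [DirectSum.decompose_mul, DirectSum.coe_mul_apply]
          apply Subalgebra.sum_mem
          intro ij hij
          rw [Finset.mem_filter] at hij
          by_cases hp : ij.1 = 0
          · rw [hp, hI m hm', zero_mul]; exact Subalgebra.zero_mem _
          · by_cases hq : ij.2 = 0
            · rw [hq, hI n hn', mul_zero]; exact Subalgebra.zero_mem _
            · have hp' : ij.1 < d := by omega
              have hq' : ij.2 < d := by omega
              exact Subalgebra.mul_mem _
                (IH ij.1 hp' _ (DirectSum.decompose 𝒜 m ij.1).2)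
                (IH ij.2 hq' _ (DirectSum.decompose 𝒜 n ij.2).2)
        · intro a b ha' hb'
          rw [DirectSum.decompose_add, DirectSum.add_apply, Submodule.coe_add]
          exact Subalgebra.add_mem _ ha' hb'
  rw [eq_top_iff]
  intro h _
  rw [← DirectSum.sum_support_decompose 𝒜 h]
  exact Subalgebra.sum_mem _ fun i _ => main i _ (DirectSum.decompose 𝒜 h i).2

end CGH

end SecGraded

section SecDer

open TensorProduct

namespace CGH

section Main

variable {k H : Type*} [Field k] [CommRing H] [Algebra k H]
variable (g : H →ₐ[k] k)

/-- The submodule `k·1 + I²` where `I = ker g`. -/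
noncomputable def Wmod : Submodule k H :=
  Submodule.span k {(1 : H)} ⊔
    Submodule.restrictScalars k ((RingHom.ker g * RingHom.ker g : Ideal H) : Submodule H H)

/-- `V = H/(k·1 + I²)`, a stand-in for `I/I²`. -/
noncomputable abbrev Vmod := H ⧸ Wmod g

noncomputable def qmap : H →ₗ[k] Vmod g := (Wmod g).mkQ

lemma qmap_one : qmap g 1 = 0 := by
  rw [qmap, Submodule.mkQ_apply, Submodule.Quotient.mk_eq_zero]
  exact Submodule.mem_sup_left (Submodule.mem_span_singleton_self 1)

lemma qmap_mul_ker {x y : H} (hx : g x = 0) (hy : g y = 0) : qmap g (x * y) = 0 := by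
  rw [qmap, Submodule.mkQ_apply, Submodule.Quotient.mk_eq_zero]
  exact Submodule.mem_sup_right
    (Ideal.mul_mem_mul (RingHom.mem_ker.mpr hx) (RingHom.mem_ker.mpr hy))

variable (Δ : H →ₐ[k] H ⊗[k] H)

noncomputable def Dmap : H →ₗ[k] H ⊗[k] Vmod g :=
  (LinearMap.lTensor H (qmap g)) ∘ₗ Δ.toLinearMap

/-- Multiplication on the left tensor factor. -/
noncomputable def Lmul (a : H) : H ⊗[k] Vmod g →ₗ[k] H ⊗[k] Vmod g :=
  LinearMap.rTensor (Vmod g) (LinearMap.mulLeft k a)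

lemma Lmul_tmul (a x : H) (v : Vmod g) : Lmul g a (x ⊗ₜ[k] v) = (a * x) ⊗ₜ[k] v := rfl

lemma Lmul_zero' (t : H ⊗[k] Vmod g) : Lmul g 0 t = 0 := by
  induction t using TensorProduct.induction_on with
  | zero => simp
  | tmul x v => rw [Lmul_tmul, zero_mul, TensorProduct.zero_tmul]
  | add s t hs ht => rw [map_add, hs, ht, add_zero]

lemma Lmul_add' (a b : H) (t : H ⊗[k] Vmod g) : Lmul g (a + b) t = Lmul g a t + Lmul g b t := by
  induction t using TensorProduct.induction_on with
  | zero => simp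
  | tmul x v => rw [Lmul_tmul, Lmul_tmul, Lmul_tmul, add_mul, TensorProduct.add_tmul]
  | add s t hs ht =>
    rw [map_add, hs, ht, map_add, map_add]
    abel

lemma Lmul_mul' (a b : H) (t : H ⊗[k] Vmod g) : Lmul g (a * b) t = Lmul g a (Lmul g b t) := by
  induction t using TensorProduct.induction_on with
  | zero => simp
  | tmul x v => rw [Lmul_tmul, Lmul_tmul, Lmul_tmul, mul_assoc]
  | add s t hs ht => rw [map_add, hs, ht, map_add, map_add]

lemma lTensor_q_mul_left (a : H) (t : H ⊗[k] H) :
    LinearMap.lTensor H (qmap g) ((a ⊗ₜ[k] (1 : H)) * t) =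
      Lmul g a (LinearMap.lTensor H (qmap g) t) := by
  induction t using TensorProduct.induction_on with
  | zero => simp
  | tmul x y =>
    rw [Algebra.TensorProduct.tmul_mul_tmul, one_mul, LinearMap.lTensor_tmul,
      LinearMap.lTensor_tmul, Lmul_tmul]
  | add s t hs ht => rw [mul_add, map_add, hs, ht, map_add, map_add]

lemma repr_of_lTensor_eq_zero (t : H ⊗[k] H)
    (ht : LinearMap.lTensor H g.toLinearMap t = 0) :
    ∃ s : Finset (H × H), t = ∑ p ∈ s, p.1 ⊗ₜ[k] (p.2 - algebraMap k H (g p.2)) := by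
  obtain ⟨s, hs⟩ := TensorProduct.exists_finset (R := k) t
  refine ⟨s, ?_⟩
  have h2 : ∑ p ∈ s, p.1 ⊗ₜ[k] (algebraMap k H (g p.2)) = 0 := by
    have h3 := congrArg (LinearMap.lTensor H (Algebra.linearMap k H))
      (ht : LinearMap.lTensor H g.toLinearMap t = 0)
    rw [map_zero, hs, map_sum, map_sum] at h3
    simpa only [LinearMap.lTensor_tmul, AlgHom.toLinearMap_apply, Algebra.linearMap_apply]
      using h3
  calc t = ∑ p ∈ s, p.1 ⊗ₜ[k] p.2 - ∑ p ∈ s, p.1 ⊗ₜ[k] (algebraMap k H (g p.2)) := by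
        rw [h2, sub_zero, hs]
    _ = ∑ p ∈ s, p.1 ⊗ₜ[k] (p.2 - algebraMap k H (g p.2)) := by
        rw [← Finset.sum_sub_distrib]
        exact Finset.sum_congr rfl fun p _ => (TensorProduct.tmul_sub p.1 _ _).symm

lemma repr_of_rTensor_eq_zero (t : H ⊗[k] H)
    (ht : LinearMap.rTensor H g.toLinearMap t = 0) :
    ∃ s : Finset (H × H), t = ∑ p ∈ s, (p.1 - algebraMap k H (g p.1)) ⊗ₜ[k] p.2 := by
  obtain ⟨s, hs⟩ := TensorProduct.exists_finset (R := k) t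
  refine ⟨s, ?_⟩
  have h2 : ∑ p ∈ s, (algebraMap k H (g p.1)) ⊗ₜ[k] p.2 = 0 := by
    have h3 := congrArg (LinearMap.rTensor H (Algebra.linearMap k H))
      (ht : LinearMap.rTensor H g.toLinearMap t = 0)
    rw [map_zero, hs, map_sum, map_sum] at h3
    simpa only [LinearMap.rTensor_tmul, AlgHom.toLinearMap_apply, Algebra.linearMap_apply]
      using h3
  calc t = ∑ p ∈ s, p.1 ⊗ₜ[k] p.2 - ∑ p ∈ s, (algebraMap k H (g p.1)) ⊗ₜ[k] p.2 := by
        rw [h2, sub_zero, hs]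
    _ = ∑ p ∈ s, (p.1 - algebraMap k H (g p.1)) ⊗ₜ[k] p.2 := by
        rw [← Finset.sum_sub_distrib]
        exact Finset.sum_congr rfl fun p _ => (TensorProduct.sub_tmul _ _ p.2).symm

variable (hL1 : ∀ h : H, LinearMap.lTensor H g.toLinearMap (Δ h) = h ⊗ₜ[k] (1 : k))
variable (hL2 : ∀ h : H, LinearMap.rTensor H g.toLinearMap (Δ h) = (1 : k) ⊗ₜ[k] h)

include hL1 in
lemma Dmap_mul (x y : H) :
    Dmap g Δ (x * y) = Lmul g x (Dmap g Δ y) + Lmul g y (Dmap g Δ x) := by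
  have hu : LinearMap.lTensor H g.toLinearMap (Δ x - x ⊗ₜ[k] (1 : H)) = 0 := by
    rw [map_sub, hL1, LinearMap.lTensor_tmul, AlgHom.toLinearMap_apply, map_one, sub_self]
  have hv : LinearMap.lTensor H g.toLinearMap (Δ y - y ⊗ₜ[k] (1 : H)) = 0 := by
    rw [map_sub, hL1, LinearMap.lTensor_tmul, AlgHom.toLinearMap_apply, map_one, sub_self]
  obtain ⟨su, hsu⟩ := repr_of_lTensor_eq_zero g _ hu
  obtain ⟨sv, hsv⟩ := repr_of_lTensor_eq_zero g _ hv
  have hgu : ∀ p : H × H, g (p.2 - algebraMap k H (g p.2)) = 0 := fun p => by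
    rw [map_sub, AlgHom.commutes, Algebra.algebraMap_self_apply, sub_self]
  have hexp : Δ (x * y) = (x ⊗ₜ[k] (1 : H)) * Δ y + (y ⊗ₜ[k] (1 : H)) * (Δ x - x ⊗ₜ[k] (1 : H))
      + (Δ x - x ⊗ₜ[k] (1 : H)) * (Δ y - y ⊗ₜ[k] (1 : H)) := by
    rw [map_mul]
    ring
  have hzero : LinearMap.lTensor H (qmap g)
      ((Δ x - x ⊗ₜ[k] (1 : H)) * (Δ y - y ⊗ₜ[k] (1 : H))) = 0 := by
    rw [hsu, hsv, Finset.sum_mul_sum, map_sum]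
    refine Finset.sum_eq_zero fun p _ => ?_
    rw [map_sum]
    refine Finset.sum_eq_zero fun p' _ => ?_
    rw [Algebra.TensorProduct.tmul_mul_tmul, LinearMap.lTensor_tmul,
      qmap_mul_ker g (hgu p) (hgu p'), TensorProduct.tmul_zero]
  have hDu : LinearMap.lTensor H (qmap g) (Δ x - x ⊗ₜ[k] (1 : H)) = Dmap g Δ x := by
    rw [map_sub, LinearMap.lTensor_tmul, qmap_one, TensorProduct.tmul_zero, sub_zero]
    rfl
  rw [Dmap, LinearMap.comp_apply, AlgHom.toLinearMap_apply, hexp, map_add, map_add,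
    lTensor_q_mul_left, lTensor_q_mul_left, hzero, add_zero, hDu]
  rfl

include hL2 in
lemma Dmap_apply_ker (x : H) (hx : g x = 0) :
    ∃ s : Finset (H × H),
      Dmap g Δ x = (1 : H) ⊗ₜ[k] qmap g x
        + ∑ p ∈ s, (p.1 - algebraMap k H (g p.1)) ⊗ₜ[k] qmap g p.2 := by
  have hw : LinearMap.rTensor H g.toLinearMap (Δ x - x ⊗ₜ[k] (1 : H) - (1 : H) ⊗ₜ[k] x) = 0 := by
    rw [map_sub, map_sub, hL2, LinearMap.rTensor_tmul, LinearMap.rTensor_tmul,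
      AlgHom.toLinearMap_apply, AlgHom.toLinearMap_apply, hx, map_one,
      TensorProduct.zero_tmul, sub_zero, sub_self]
  obtain ⟨s, hs⟩ := repr_of_rTensor_eq_zero g _ hw
  refine ⟨s, ?_⟩
  have hx' : Δ x = x ⊗ₜ[k] (1 : H) + (1 : H) ⊗ₜ[k] x
      + ∑ p ∈ s, (p.1 - algebraMap k H (g p.1)) ⊗ₜ[k] p.2 := by
    rw [← hs]; ring
  rw [Dmap, LinearMap.comp_apply, AlgHom.toLinearMap_apply, hx', map_add, map_add,
    LinearMap.lTensor_tmul, LinearMap.lTensor_tmul, qmap_one, TensorProduct.tmul_zero,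
    zero_add, map_sum]
  simp only [LinearMap.lTensor_tmul]

include hL1 in
lemma Dmap_one : Dmap g Δ 1 = 0 := by
  rw [Dmap, LinearMap.comp_apply, AlgHom.toLinearMap_apply, map_one,
    Algebra.TensorProduct.one_def, LinearMap.lTensor_tmul, qmap_one, TensorProduct.tmul_zero]

include hL1 in
lemma Dmap_aeval {n : ℕ} (x : Fin n → H) (f : MvPolynomial (Fin n) k) :
    Dmap g Δ (MvPolynomial.aeval x f) =
      ∑ j, Lmul g (MvPolynomial.aeval x (MvPolynomial.pderiv j f)) (Dmap g Δ (x j)) := by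
  classical
  induction f using MvPolynomial.induction_on with
  | C c =>
    rw [MvPolynomial.aeval_C, Algebra.algebraMap_eq_smul_one, map_smul, Dmap_one g Δ hL1,
      smul_zero]
    refine (Finset.sum_eq_zero fun j _ => ?_).symm
    rw [MvPolynomial.pderiv_C, map_zero, Lmul_zero']
  | add p p' hp hp' =>
    rw [map_add, map_add, hp, hp', ← Finset.sum_add_distrib]
    refine Finset.sum_congr rfl fun j _ => ?_
    rw [map_add, map_add, Lmul_add']
  | mul_X p i hp =>
    rw [map_mul, MvPolynomial.aeval_X, Dmap_mul g Δ hL1, hp]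
    have hrhs : ∀ j : Fin n,
        Lmul g (MvPolynomial.aeval x (MvPolynomial.pderiv j (p * MvPolynomial.X i)))
          (Dmap g Δ (x j)) =
        Lmul g (MvPolynomial.aeval x (MvPolynomial.pderiv j p) * x i) (Dmap g Δ (x j))
          + Lmul g (MvPolynomial.aeval x p * MvPolynomial.aeval x
              (MvPolynomial.pderiv j (MvPolynomial.X i : MvPolynomial (Fin n) k))) (Dmap g Δ (x j)) := by
      intro j
      rw [MvPolynomial.pderiv_mul, map_add, map_mul, map_mul, MvPolynomial.aeval_X, Lmul_add']
    rw [Finset.sum_congr rfl fun j _ => hrhs j, Finset.sum_add_distrib]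
    have hsecond : ∑ j, Lmul g (MvPolynomial.aeval x p * MvPolynomial.aeval x
        (MvPolynomial.pderiv j (MvPolynomial.X i : MvPolynomial (Fin n) k))) (Dmap g Δ (x j)) =
        Lmul g (MvPolynomial.aeval x p) (Dmap g Δ (x i)) := by
      rw [Finset.sum_eq_single i]
      · rw [MvPolynomial.pderiv_X_self, map_one, mul_one]
      · intro j _ hji
        rw [MvPolynomial.pderiv_X_of_ne (Ne.symm hji), map_zero, mul_zero, Lmul_zero']
      · intro hni
        exact absurd (Finset.mem_univ i) hni
    rw [hsecond]
    have hfirst : Lmul g (x i) (∑ j, Lmul g (MvPolynomial.aeval x (MvPolynomial.pderiv j p))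
        (Dmap g Δ (x j))) =
        ∑ j, Lmul g (MvPolynomial.aeval x (MvPolynomial.pderiv j p) * x i)
          (Dmap g Δ (x j)) := by
      rw [map_sum]
      refine Finset.sum_congr rfl fun j _ => ?_
      rw [mul_comm, Lmul_mul']
    rw [hfirst]
    exact add_comm _ _

end Main

end CGH

end SecDer

section SecCoord

open TensorProduct

namespace CGH

section Main2

variable {k H : Type*} [Field k] [CommRing H] [Algebra k H]
variable (g : H →ₐ[k] k) (Δ : H →ₐ[k] H ⊗[k] H)
variable {n : ℕ} (B : Module.Basis (Fin n) k (Vmod g))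

noncomputable def chim (l : Fin n) : H ⊗[k] Vmod g →ₗ[k] H :=
  (TensorProduct.rid k H).toLinearMap ∘ₗ LinearMap.lTensor H (B.coord l)

lemma chim_tmul (l : Fin n) (a : H) (v : Vmod g) :
    chim g B l (a ⊗ₜ[k] v) = B.coord l v • a := by
  rw [chim, LinearMap.comp_apply, LinearMap.lTensor_tmul]
  exact TensorProduct.rid_tmul a _

lemma chim_Lmul (l : Fin n) (a : H) (t : H ⊗[k] Vmod g) :
    chim g B l (Lmul g a t) = a * chim g B l t := by
  induction t using TensorProduct.induction_on with
  | zero => simp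
  | tmul x v =>
    rw [Lmul_tmul, chim_tmul, chim_tmul, mul_smul_comm]
  | add s t hs ht => rw [map_add, map_add, hs, ht, map_add, mul_add]

variable (x : Fin n → H) (hB : ∀ j, B j = qmap g (x j)) (hxk : ∀ j, g (x j) = 0)
variable (hL1 : ∀ h : H, LinearMap.lTensor H g.toLinearMap (Δ h) = h ⊗ₜ[k] (1 : k))
variable (hL2 : ∀ h : H, LinearMap.rTensor H g.toLinearMap (Δ h) = (1 : k) ⊗ₜ[k] h)

include hB hxk hL1 hL2 in
lemma aeval_pderiv_mem_pow (f : MvPolynomial (Fin n) k)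
    (hf : MvPolynomial.aeval x f = 0) :
    ∀ s : ℕ, ∀ j, MvPolynomial.aeval x (MvPolynomial.pderiv j f) ∈ (RingHom.ker g) ^ s := by
  classical
  set gv : Fin n → H := fun j => MvPolynomial.aeval x (MvPolynomial.pderiv j f) with hgv
  choose sj hsj using fun j => Dmap_apply_ker g Δ hL2 (x j) (hxk j)
  set z : Fin n → H ⊗[k] Vmod g := fun j =>
    ∑ p ∈ sj j, (p.1 - algebraMap k H (g p.1)) ⊗ₜ[k] qmap g p.2 with hz
  set c : Fin n → Fin n → H := fun j l => chim g B l (z j) with hc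
  have hcker : ∀ j l, g (c j l) = 0 := by
    intro j l
    rw [hc]
    simp only [hz, map_sum, chim_tmul]
    refine Finset.sum_eq_zero fun p _ => ?_
    rw [map_smul, map_sub, AlgHom.commutes, Algebra.algebraMap_self_apply, sub_self, smul_zero]
  have hmain : ∀ l, gv l + ∑ j, gv j * c j l = 0 := by
    intro l
    have h0 : Dmap g Δ (MvPolynomial.aeval x f) = 0 := by rw [hf, map_zero]
    rw [Dmap_aeval g Δ hL1 x f] at h0
    have h1 := congrArg (chim g B l) h0
    rw [map_zero, map_sum] at h1
    have h2 : ∀ j, chim g B l (Lmul g (gv j) (Dmap g Δ (x j))) =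
        gv j * ((if j = l then (1 : k) else 0) • 1 + c j l) := by
      intro j
      rw [chim_Lmul]
      congr 1
      rw [hsj j, map_add, chim_tmul, hc]
      congr 2
      rw [← hB j, Module.Basis.coord_apply, Module.Basis.repr_self]
      exact Finsupp.single_apply
    rw [Finset.sum_congr rfl fun j _ => h2 j] at h1
    have h3 : ∀ j, gv j * ((if j = l then (1 : k) else 0) • 1 + c j l) =
        (if j = l then gv j else 0) + gv j * c j l := by
      intro j
      by_cases hjl : j = l
      · rw [if_pos hjl, if_pos hjl, one_smul, mul_add, mul_one]
      · rw [if_neg hjl, if_neg hjl, zero_smul, zero_add, zero_add]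
    rw [Finset.sum_congr rfl fun j _ => h3 j, Finset.sum_add_distrib,
      Finset.sum_ite_eq' Finset.univ l gv, if_pos (Finset.mem_univ l)] at h1
    exact h1
  intro s
  induction s with
  | zero =>
    intro j
    rw [pow_zero, Ideal.one_eq_top]
    exact Submodule.mem_top
  | succ s IH =>
    intro j
    have hj : gv j = -∑ i, gv i * c i j := eq_neg_of_add_eq_zero_left (hmain j)
    show gv j ∈ _
    rw [hj]
    refine neg_mem (Submodule.sum_mem _ fun i _ => ?_)
    rw [pow_succ]
    exact Ideal.mul_mem_mul (IH i) (RingHom.mem_ker.mpr (hcker i j))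

end Main2

end CGH

end SecCoord

open TensorProduct

/-- Let `k` be an algebraically closed field of characteristic zero and `H` a commutative
Hopf `k`-algebra which is finitely generated as a `k`-algebra. If `H` is connected graded
as an algebra (`H = ⊕ᵢ H(i)` with `H(i)H(j) ⊆ H(i+j)` and `H(0) = k·1`), then `H` is
isomorphic as a `k`-algebra to a polynomial algebra in finitely many variables. -/
theorem connected_graded_affine_commutative_hopf_is_polynomial
    {k H : Type*} [Field k] [IsAlgClosed k] [CharZero k]
    [CommRing H] [HopfAlgebra k H] [hft : Algebra.FiniteType k H]
    (𝒜 : ℕ → Submodule k H) [GradedAlgebra 𝒜]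
    (hconn : 𝒜 0 = (1 : Submodule k H)) :
    ∃ n : ℕ, Nonempty (H ≃ₐ[k] MvPolynomial (Fin n) k) := by
  classical
  haveI hnt : Nontrivial H := by
    refine ⟨1, 0, fun h01 => ?_⟩
    have h1 := map_one (Bialgebra.counitAlgHom k H)
    rw [h01, map_zero] at h1
    exact zero_ne_one h1
  set g : H →ₐ[k] k := CGH.proj0 𝒜 hconn with hgdef
  set Δ : H →ₐ[k] H ⊗[k] H := CGH.comul' g with hΔdef
  have hL1 : ∀ h : H, LinearMap.lTensor H g.toLinearMap (Δ h) = h ⊗ₜ[k] (1 : k) :=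
    CGH.lTensor_comul' g
  have hL2 : ∀ h : H, LinearMap.rTensor H g.toLinearMap (Δ h) = (1 : k) ⊗ₜ[k] h :=
    CGH.rTensor_comul' g
  set I : Ideal H := RingHom.ker g with hIdef
  have hI0 : ∀ y ∈ I, (DirectSum.decompose 𝒜 y 0 : H) = 0 := fun y hy =>
    (CGH.proj0_eq_zero_iff 𝒜 hconn y).mp (RingHom.mem_ker.mp hy)
  -- homogeneous generators
  obtain ⟨T, hT⟩ := hft.out
  set S : Finset H := T.biUnion (fun t => (DirectSum.decompose 𝒜 t).support.image
    (fun i => (DirectSum.decompose 𝒜 t i : H))) with hSdef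
  have hShom : ∀ s ∈ S, ∃ d, s ∈ 𝒜 d := by
    intro s hs
    rw [hSdef, Finset.mem_biUnion] at hs
    obtain ⟨t, _, hs2⟩ := hs
    rw [Finset.mem_image] at hs2
    obtain ⟨i, _, rfl⟩ := hs2
    exact ⟨i, (DirectSum.decompose 𝒜 t i).2⟩
  have hSgen : Algebra.adjoin k (↑S : Set H) = ⊤ := by
    rw [eq_top_iff, ← hT]
    apply Algebra.adjoin_le
    intro t ht
    rw [← DirectSum.sum_support_decompose 𝒜 t]
    refine Subalgebra.sum_mem _ fun i hi => ?_
    apply Algebra.subset_adjoin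
    rw [hSdef]
    exact Finset.mem_coe.mpr (Finset.mem_biUnion.mpr ⟨t, ht, Finset.mem_image.mpr ⟨i, hi, rfl⟩⟩)
  -- images under q span V
  have hqspan : Submodule.span k (CGH.qmap g '' (↑S : Set H)) = ⊤ := by
    rw [Submodule.eq_top_iff']
    intro v
    obtain ⟨h, rfl⟩ := Submodule.mkQ_surjective (CGH.Wmod g) v
    show CGH.qmap g h ∈ _
    have hmem : h ∈ Algebra.adjoin k (↑S : Set H) := by rw [hSgen]; trivial
    induction hmem using Algebra.adjoin_induction with
    | mem s hs => exact Submodule.subset_span ⟨s, hs, rfl⟩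
    | algebraMap c =>
      rw [Algebra.algebraMap_eq_smul_one, map_smul, CGH.qmap_one, smul_zero]
      exact zero_mem _
    | add a b ha hb hpa hpb => rw [map_add]; exact add_mem hpa hpb
    | mul a b ha hb hpa hpb =>
      have hab : a * b = (a - algebraMap k H (g a)) * (b - algebraMap k H (g b))
          + g b • a + g a • b - (g a * g b) • (1 : H) := by
        rw [Algebra.smul_def, Algebra.smul_def, Algebra.smul_def, map_mul]
        ring
      have hga : g (a - algebraMap k H (g a)) = 0 := by
        rw [map_sub, AlgHom.commutes, Algebra.algebraMap_self_apply, sub_self]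
      have hgb : g (b - algebraMap k H (g b)) = 0 := by
        rw [map_sub, AlgHom.commutes, Algebra.algebraMap_self_apply, sub_self]
      rw [hab, map_sub, map_add, map_add, CGH.qmap_mul_ker g hga hgb, zero_add,
        map_smul, map_smul, map_smul, CGH.qmap_one, smul_zero, sub_zero]
      exact add_mem (Submodule.smul_mem _ _ hpa) (Submodule.smul_mem _ _ hpb)
  -- select a basis out of the image of S
  obtain ⟨b, hbsub, hbspan, hbind⟩ := exists_linearIndependent k (CGH.qmap g '' (↑S : Set H))
  rw [hqspan] at hbspan
  have hbfin : b.Finite := Set.Finite.subset ((S.finite_toSet).image _) hbsub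
  haveI := hbfin.fintype
  set n := Fintype.card b with hn
  set e : Fin n ≃ b := (Fintype.equivFin b).symm with he
  have hchoice : ∀ v : b, ∃ s : H, s ∈ S ∧ CGH.qmap g s = v := by
    intro v
    obtain ⟨s, hsS, hsv⟩ := hbsub v.2
    exact ⟨s, hsS, hsv⟩
  choose xs hxsS hxsq using hchoice
  set x : Fin n → H := fun j => xs (e j) with hxdef
  have hxq : ∀ j, CGH.qmap g (x j) = ((e j : b) : CGH.Vmod g) := fun j => hxsq (e j)
  have hfun : (fun j => CGH.qmap g (x j)) = ((↑) ∘ e) := funext fun j => hxq j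
  have hLI : LinearIndependent k (fun j => CGH.qmap g (x j)) := by
    rw [hfun]
    exact hbind.comp e e.injective
  have hrange : (Set.range fun j => CGH.qmap g (x j)) = b := by
    rw [hfun, Set.range_comp, Equiv.range_eq_univ, Set.image_univ, Subtype.range_coe]
  have hspanx : ⊤ ≤ Submodule.span k (Set.range fun j => CGH.qmap g (x j)) := by
    rw [hrange, hbspan]
  set B : Module.Basis (Fin n) k (CGH.Vmod g) := Module.Basis.mk hLI hspanx with hBdef
  have hBj : ∀ j, B j = CGH.qmap g (x j) := fun j => Module.Basis.mk_apply hLI hspanx j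
  have hxhom : ∀ j, ∃ d, x j ∈ 𝒜 d := fun j => hShom _ (hxsS (e j))
  have hxI : ∀ j, g (x j) = 0 := by
    intro j
    obtain ⟨d, hd⟩ := hxhom j
    rcases Nat.eq_zero_or_pos d with hd0 | hdpos
    · exfalso
      rw [hd0] at hd
      have hd1 : x j ∈ (1 : Submodule k H) := by rw [← hconn]; exact hd
      obtain ⟨c, hc⟩ := Submodule.mem_one.mp hd1
      have hq0 : CGH.qmap g (x j) = 0 := by
        rw [← hc, Algebra.algebraMap_eq_smul_one, map_smul, CGH.qmap_one, smul_zero]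
      exact B.ne_zero j (by rw [hBj j, hq0])
    · apply (CGH.proj0_eq_zero_iff 𝒜 hconn _).mpr
      exact DirectSum.decompose_of_mem_ne 𝒜 hd (by omega)
  -- the x generate H
  have hdec : ∀ h : H, ∃ (c : k) (cf : Fin n → k) (z : H), z ∈ I * I ∧
      h = algebraMap k H c + (∑ j, cf j • x j) + z := by
    intro h
    set cf : Fin n → k := fun j => B.repr (CGH.qmap g h) j with hcf
    have hq0 : CGH.qmap g (h - ∑ j, cf j • x j) = 0 := by
      rw [map_sub, map_sum]
      have : ∀ j, CGH.qmap g (cf j • x j) = cf j • B j := by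
        intro j
        rw [map_smul, hBj j]
      rw [Finset.sum_congr rfl fun j _ => this j, B.sum_repr (CGH.qmap g h), sub_self]
    rw [CGH.qmap, Submodule.mkQ_apply, Submodule.Quotient.mk_eq_zero, CGH.Wmod,
      Submodule.mem_sup] at hq0
    obtain ⟨y, hy, z, hz, hyz⟩ := hq0
    obtain ⟨c, hc⟩ := Submodule.mem_span_singleton.mp hy
    refine ⟨c, cf, z, hz, ?_⟩
    have hyc : y = algebraMap k H c := by rw [← hc, Algebra.algebraMap_eq_smul_one]
    have : h = y + z + ∑ j, cf j • x j := by
      rw [hyz]; ring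
    rw [this, hyc]
    ring
  have hadj : Algebra.adjoin k (Set.range x) = ⊤ :=
    CGH.adjoin_eq_top_of_generates 𝒜 hconn I hI0 x hxhom hdec
  -- surjectivity
  have hsurj : Function.Surjective (MvPolynomial.aeval (R := k) x) := by
    rw [← AlgHom.range_eq_top]
    rw [← Algebra.adjoin_range_eq_range_aeval, hadj]
  -- every relation dies
  have hstep : ∀ f : MvPolynomial (Fin n) k, MvPolynomial.aeval x f = 0 →
      ∀ j, MvPolynomial.aeval x (MvPolynomial.pderiv j f) = 0 := by
    intro f hf j
    apply CGH.eq_zero_of_forall_mem_pow 𝒜 I hI0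
    intro s
    exact CGH.aeval_pderiv_mem_pow g Δ B x hBj hxI hL1 hL2 f hf s j
  have hker : ∀ f : MvPolynomial (Fin n) k, MvPolynomial.aeval x f = 0 → f = 0 := by
    suffices hdeg : ∀ d, ∀ f : MvPolynomial (Fin n) k, MvPolynomial.aeval x f = 0 →
        f.totalDegree ≤ d → f = 0 by
      intro f hf
      exact hdeg f.totalDegree f hf le_rfl
    intro d
    induction d with
    | zero =>
      intro f hf hd0
      have hC : f = MvPolynomial.C (MvPolynomial.coeff 0 f) := by
        ext m
        rw [MvPolynomial.coeff_C]
        by_cases hm : 0 = m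
        · rw [if_pos hm, ← hm]
        · rw [if_neg hm]
          by_contra hne
          have hmem : m ∈ f.support := MvPolynomial.mem_support_iff.mpr hne
          have h1 := MvPolynomial.le_totalDegree hmem
          have hm' : m ≠ 0 := fun hh => hm hh.symm
          obtain ⟨j, hj⟩ : ∃ j, m j ≠ 0 := by
            by_contra hcon
            push_neg at hcon
            exact hm' (Finsupp.ext fun j => hcon j)
          have hjs : j ∈ m.support := Finsupp.mem_support_iff.mpr hj
          have h2 : m j ≤ m.sum fun _ e => e :=
            Finset.single_le_sum (fun i _ => Nat.zero_le (m i)) hjs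
          omega
      rw [hC] at hf ⊢
      rw [MvPolynomial.aeval_C] at hf
      have hc0 : MvPolynomial.coeff 0 f = 0 := by
        apply RingHom.injective (algebraMap k H)
        rw [hf, map_zero]
      rw [hc0, map_zero]
    | succ d IH =>
      intro f hf hdle
      have hdj : ∀ j, MvPolynomial.pderiv j f = 0 := fun j =>
        IH _ (hstep f hf j) (CGH.totalDegree_pderiv_le j f d hdle)
      have hC := CGH.eq_C_of_pderiv_eq_zero f hdj
      rw [hC] at hf ⊢
      rw [MvPolynomial.aeval_C] at hf
      have hc0 : MvPolynomial.coeff 0 f = 0 := by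
        apply RingHom.injective (algebraMap k H)
        rw [hf, map_zero]
      rw [hc0, map_zero]
  have hinj : Function.Injective (MvPolynomial.aeval (R := k) x) :=
    (injective_iff_map_eq_zero _).mpr hker
  exact ⟨n, ⟨(AlgEquiv.ofBijective (MvPolynomial.aeval (R := k) x) ⟨hinj, hsurj⟩).symm⟩⟩
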